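/- Let F be a countable algebraically closed field with enumeration F = {a_1, a_2, ...}, m the kernel of the F-algebra epimorphism ε : F[t_i | i ∈ ℕ] → F(s) given by t_0 ↦ s, t_i ↦ 1/(s − a_i) for i ≥ 1, and set p_i := m ∩ F[t_0,…,t_i]. Then the closed sets C_i := π_i^{-1}(V(p_i)) ⊆ F^ℕ (where π_i : F^ℕ → F^{i+1} is the projection to the first i+1 coordinates and V is the vanishing locus in F^{i+1}) are nonempty and form a descending chain with empty intersection; consequently F^ℕ with the Zariski topology is not quasi-compact. -/

import Mathlib

/-- The Zariski topology on the affine space `σ → F`: it is generated by the complements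
of zero loci of ideals of the polynomial ring `F[t_i | i ∈ σ]`. -/
def zariskiTopology (σ F : Type*) [Field F] : TopologicalSpace (σ → F) :=
  TopologicalSpace.generateFrom
    {U : Set (σ → F) | ∃ I : Ideal (MvPolynomial σ F), U = (MvPolynomial.zeroLocus F I)ᶜ}

/-- The homomorphism `ε : F[t_i | i ∈ ℕ] → F(s)`, `t_0 ↦ s`, `t_i ↦ 1/(s - a i)`. -/
noncomputable def eps {F : Type*} [Field F] (a : ℕ → F) : MvPolynomial ℕ F →+* RatFunc F :=
  MvPolynomial.eval₂Hom (RatFunc.C : F →+* RatFunc F)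
    (fun i : ℕ => if i = 0 then RatFunc.X else (RatFunc.X - RatFunc.C (a i))⁻¹)

/-- The closed set `C_i = π_i⁻¹(V(p_i)) ⊆ F^ℕ`, where `p_i = m ∩ F[t_0,…,t_i]` is the
contraction of `m = ker ε` and `π_i` is the projection to the first `i + 1` coordinates. -/
noncomputable def Cset {F : Type*} [Field F] (a : ℕ → F) (i : ℕ) : Set (ℕ → F) :=
  (fun (x : ℕ → F) (j : Fin (i + 1)) => x (j : ℕ)) ⁻¹'
    MvPolynomial.zeroLocus F
      (Ideal.comap (MvPolynomial.rename (Fin.val : Fin (i + 1) → ℕ) :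
          MvPolynomial (Fin (i + 1)) F →ₐ[F] MvPolynomial ℕ F)
        (RingHom.ker (eps a)))

/-- For a countable algebraically closed field `F`, the sets `C_i ⊆ F^ℕ` are nonempty
closed sets forming a descending chain with empty intersection; consequently `F^ℕ` with
the Zariski topology is not quasi-compact. -/

lemma mem_zeroLocus_map_rename_iff {F σ τ : Type*} [Field F] (f : σ → τ)
    (I : Ideal (MvPolynomial σ F)) (x : τ → F) :
    x ∈ MvPolynomial.zeroLocus F (I.map
      (MvPolynomial.rename f : MvPolynomial σ F →ₐ[F] MvPolynomial τ F)) ↔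
    (x ∘ f) ∈ MvPolynomial.zeroLocus F I := by
  constructor
  · intro h p hp
    have := h (MvPolynomial.rename f p) (Ideal.mem_map_of_mem _ hp)
    rwa [MvPolynomial.aeval_rename] at this
  · intro h g hg
    refine Submodule.span_induction ?_ ?_ ?_ ?_ hg
    · rintro y ⟨p, hp, rfl⟩
      rw [MvPolynomial.aeval_rename]
      exact h p hp
    · simp
    · intro u v _ _ hu hv; rw [map_add, hu, hv, add_zero]
    · intro r u _ hu; rw [smul_eq_mul, map_mul, hu, mul_zero]

theorem stmt14 {F : Type*} [Field F] [IsAlgClosed F] [Countable F]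
    (a : ℕ → F) (ha : ∀ x : F, ∃ i : ℕ, 0 < i ∧ a i = x) :
    (∀ i : ℕ, @IsClosed (ℕ → F) (zariskiTopology ℕ F) (Cset a i)) ∧
    (∀ i : ℕ, (Cset a i).Nonempty) ∧
    (∀ i : ℕ, Cset a (i + 1) ⊆ Cset a i) ∧
    (⋂ i : ℕ, Cset a i) = ∅ ∧
    ¬ @CompactSpace (ℕ → F) (zariskiTopology ℕ F) := by
  letI : TopologicalSpace (ℕ → F) := zariskiTopology ℕ F
  set p : (i : ℕ) → Ideal (MvPolynomial (Fin (i + 1)) F) := fun i =>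
    Ideal.comap (MvPolynomial.rename (Fin.val : Fin (i + 1) → ℕ) :
        MvPolynomial (Fin (i + 1)) F →ₐ[F] MvPolynomial ℕ F) (RingHom.ker (eps a)) with hp
  -- Cset as a zero locus in infinitely many variables
  have hC : ∀ i, Cset a i = MvPolynomial.zeroLocus F ((p i).map
      (MvPolynomial.rename (Fin.val : Fin (i + 1) → ℕ) :
        MvPolynomial (Fin (i + 1)) F →ₐ[F] MvPolynomial ℕ F)) := by
    intro i
    ext x
    rw [mem_zeroLocus_map_rename_iff]
    rfl
  -- closedness
  have hclosed : ∀ i, IsClosed (Cset a i) := by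
    intro i
    rw [← isOpen_compl_iff]
    exact TopologicalSpace.GenerateOpen.basic _ ⟨_, by rw [hC i]⟩
  -- nonemptiness
  have hne : ∀ i, (Cset a i).Nonempty := by
    intro i
    have hproper : p i ≠ ⊤ := by
      intro h
      have h1 : (1 : MvPolynomial (Fin (i + 1)) F) ∈ p i := h ▸ trivial
      have h2 : (eps a) (MvPolynomial.rename (Fin.val : Fin (i + 1) → ℕ) 1) = 0 :=
        Ideal.mem_comap.mp h1
      simp at h2
    have hzl : (MvPolynomial.zeroLocus F (p i)).Nonempty := by
      by_contra hempty
      rw [Set.not_nonempty_iff_eq_empty] at hempty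
      have := MvPolynomial.vanishingIdeal_zeroLocus_eq_radical (K := F) (p i)
      rw [hempty, MvPolynomial.vanishingIdeal_empty] at this
      exact hproper (Ideal.radical_eq_top.mp this.symm)
    obtain ⟨y, hy⟩ := hzl
    refine ⟨fun j => if h : j < i + 1 then y ⟨j, h⟩ else 0, ?_⟩
    show (fun j : Fin (i + 1) => _) ∈ MvPolynomial.zeroLocus F (p i)
    convert hy using 1
    funext j
    simp [j.isLt]
  -- descending
  have hsub : ∀ i, Cset a (i + 1) ⊆ Cset a i := by
    intro i x hx f hf
    have hmem : MvPolynomial.rename (Fin.castSucc : Fin (i + 1) → Fin (i + 2)) f ∈ p (i + 1) := by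
      rw [hp]
      simp only [Ideal.mem_comap, AlgHom.coe_coe, MvPolynomial.rename_rename]
      have : (Fin.val : Fin (i + 2) → ℕ) ∘ (Fin.castSucc : Fin (i + 1) → Fin (i + 2)) =
          (Fin.val : Fin (i + 1) → ℕ) := funext fun j => Fin.coe_castSucc j
      rw [this]
      exact hf
    have := hx _ hmem
    rw [MvPolynomial.aeval_rename] at this
    exact this
  -- empty intersection
  have hempty : (⋂ i : ℕ, Cset a i) = ∅ := by
    rw [Set.eq_empty_iff_forall_notMem]
    intro x hx
    rw [Set.mem_iInter] at hx
    obtain ⟨k, hk, hak⟩ := ha (x 0)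
    set f : MvPolynomial (Fin (k + 1)) F :=
      (MvPolynomial.X ⟨0, k.succ_pos⟩ - MvPolynomial.C (a k)) *
        MvPolynomial.X ⟨k, Nat.lt_succ_self k⟩ - 1 with hf
    have hXC : RatFunc.X - RatFunc.C (a k) ≠ 0 := by
      rw [← RatFunc.algebraMap_X, ← RatFunc.algebraMap_C, ← map_sub]
      exact RatFunc.algebraMap_ne_zero (Polynomial.X_sub_C_ne_zero (a k))
    have hfmem : f ∈ p k := by
      rw [hp]
      simp only [Ideal.mem_comap, AlgHom.coe_coe, RingHom.mem_ker]
      simp only [hf, map_sub, map_mul, map_one, MvPolynomial.rename_X, MvPolynomial.rename_C]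
      simp only [eps, MvPolynomial.eval₂Hom_C, MvPolynomial.eval₂Hom_X']
      simp only [hk.ne', if_false, if_true, eq_self_iff_true]
      rw [mul_inv_cancel₀ hXC, sub_self]
    have := hx k f hfmem
    simp only [hf, map_sub, map_mul, map_one, MvPolynomial.aeval_X, MvPolynomial.aeval_C, Algebra.algebraMap_self, RingHom.id_apply] at this
    rw [← hak] at this
    simp at this
  refine ⟨hclosed, hne, hsub, hempty, ?_⟩
  intro hcomp
  have := IsCompact.nonempty_iInter_of_sequence_nonempty_isCompact_isClosed (Cset a)
    hsub hne ((hclosed 0).isCompact) hclosed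
  rw [hempty] at this
  exact this.ne_empty rfl
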